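/- Fix ε > 0 and let V(q) = ((e^ε − 1)q + 1)² / ((e^ε − 1)²·(1 − q)·q) for q ∈ (0,1). Then for every q ∈ (0,1), V(q) ≥ 4e^ε/(e^ε − 1)², with equality if and only if q = 1/(e^ε + 1) (in which case the corresponding p satisfying p(1−q)/((1−p)q) = e^ε equals 1/2). In particular, the Optimized Unary Encoding protocol, with p = 1/2 and q = 1/(e^ε + 1), has approximate estimator variance n·4e^ε/(e^ε − 1)², which is minimal among all unary-encoding protocols satisfying ε-LDP. -/

import Mathlib

/-- Optimized Unary Encoding: the unary-encoding approximate variance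
`V(q) = ((e^ε−1)q+1)²/((e^ε−1)²(1−q)q)` satisfies `V(q) ≥ 4e^ε/(e^ε−1)²` for all
`q ∈ (0,1)`, with equality iff `q = 1/(e^ε+1)`; and for that `q`, the unique `p` with
`p(1−q)/((1−p)q) = e^ε` is `p = 1/2`. -/
theorem oue_optimal
    (ε : ℝ) (hε : 0 < ε) :
    (∀ q : ℝ, 0 < q → q < 1 →
      (4 * Real.exp ε / (Real.exp ε - 1) ^ 2
          ≤ ((Real.exp ε - 1) * q + 1) ^ 2 / ((Real.exp ε - 1) ^ 2 * (1 - q) * q)) ∧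
      (((Real.exp ε - 1) * q + 1) ^ 2 / ((Real.exp ε - 1) ^ 2 * (1 - q) * q)
          = 4 * Real.exp ε / (Real.exp ε - 1) ^ 2 ↔ q = 1 / (Real.exp ε + 1))) ∧
    (∀ p : ℝ,
      p * (1 - 1 / (Real.exp ε + 1)) / ((1 - p) * (1 / (Real.exp ε + 1))) = Real.exp ε →
      p = 1 / 2) := by
  have hE : 1 < Real.exp ε := by
    have := Real.add_one_lt_exp hε.ne'
    linarith
  set E := Real.exp ε with hEdef
  have hE0 : 0 < E - 1 := by linarith
  have hE2 : (0:ℝ) < (E - 1) ^ 2 := by positivity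
  constructor
  · intro q hq0 hq1
    have hq1' : 0 < 1 - q := by linarith
    have hden : (0:ℝ) < (E - 1) ^ 2 * (1 - q) * q := by positivity
    constructor
    · rw [div_le_div_iff₀ hE2 hden]
      nlinarith [sq_nonneg ((E + 1) * q - 1)]
    · constructor
      · intro h
        rw [div_eq_div_iff hden.ne' hE2.ne'] at h
        have key : ((E + 1) * q - 1) ^ 2 = 0 := by nlinarith
        have : (E + 1) * q - 1 = 0 := by
          exact pow_eq_zero_iff (by norm_num) |>.mp key
        have hE1 : (0:ℝ) < E + 1 := by linarith
        field_simp
        linarith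
      · intro h
        subst h
        have hE1 : E + 1 ≠ 0 := by positivity
        rw [div_eq_div_iff hden.ne' hE2.ne']
        field_simp
        ring
  · intro p hp
    have hE1 : (0:ℝ) < E + 1 := by linarith
    by_cases hp1 : p = 1
    · exfalso
      rw [hp1] at hp
      simp at hp
      linarith
    · have h1p : 1 - p ≠ 0 := fun h => hp1 (by linarith)
      have h1 : (1:ℝ) - 1 / (E + 1) = E / (E + 1) := by
        field_simp
        ring
      rw [h1] at hp
      field_simp at hp
      have hEne : E ≠ 0 := by linarith
      -- hp : p * E = E * (1 - p) or similar; solve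
      nlinarith [hp]
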